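/- The group presented with four generators x, y, z, h and relators x h x⁻¹ h⁻¹, y h y⁻¹ h⁻¹, z h z⁻¹ h⁻¹, x² h, y² h, z⁻² h, and x y z (i.e., the fundamental-group presentation of a Seifert fibered space over S² with three exceptional fibers of indices 2, 2, −2) is isomorphic to the quaternion group of order 8. -/

import Mathlib

/-- The relator set for the fundamental-group presentation of the quaternion space:
generators `x = of 0`, `y = of 1`, `z = of 2`, `h = of 3`, relators
`xhx⁻¹h⁻¹, yhy⁻¹h⁻¹, zhz⁻¹h⁻¹, x²h, y²h, z⁻²h, xyz`. -/
def quaternionSpaceRels : Set (FreeGroup (Fin 4)) :=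
  { FreeGroup.of 0 * FreeGroup.of 3 * (FreeGroup.of 0)⁻¹ * (FreeGroup.of 3)⁻¹,
    FreeGroup.of 1 * FreeGroup.of 3 * (FreeGroup.of 1)⁻¹ * (FreeGroup.of 3)⁻¹,
    FreeGroup.of 2 * FreeGroup.of 3 * (FreeGroup.of 2)⁻¹ * (FreeGroup.of 3)⁻¹,
    FreeGroup.of 0 ^ 2 * FreeGroup.of 3,
    FreeGroup.of 1 ^ 2 * FreeGroup.of 3,
    (FreeGroup.of 2)⁻¹ ^ 2 * FreeGroup.of 3,
    FreeGroup.of 0 * FreeGroup.of 1 * FreeGroup.of 2 }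

namespace QSpaceAux

open QuaternionGroup

abbrev P := PresentedGroup quaternionSpaceRels

noncomputable def X : P := PresentedGroup.of 0
noncomputable def Y : P := PresentedGroup.of 1
noncomputable def Z : P := PresentedGroup.of 2
noncomputable def H : P := PresentedGroup.of 3

lemma rel_one {r : FreeGroup (Fin 4)} (hr : r ∈ quaternionSpaceRels) :
    (QuotientGroup.mk' (Subgroup.normalClosure quaternionSpaceRels) r : P) = 1 := by
  rw [QuotientGroup.mk'_apply, QuotientGroup.eq_one_iff]
  exact Subgroup.subset_normalClosure hr

lemma of_eq (i : Fin 4) :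
    (QuotientGroup.mk' (Subgroup.normalClosure quaternionSpaceRels)) (FreeGroup.of i)
      = PresentedGroup.of i := rfl

lemma relXH : X * H * X⁻¹ * H⁻¹ = 1 := by
  have := rel_one (Or.inl rfl)
  simp only [map_mul, map_inv, of_eq, X, H] at this
  exact this

lemma relYH : Y * H * Y⁻¹ * H⁻¹ = 1 := by
  have := rel_one (Or.inr (Or.inl rfl))
  simp only [map_mul, map_inv, of_eq, Y, H] at this
  exact this

lemma relX2 : X ^ 2 * H = 1 := by
  have := rel_one (Or.inr (Or.inr (Or.inr (Or.inl rfl))))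
  simp only [map_mul, map_pow, of_eq, X, H] at this
  exact this

lemma relY2 : Y ^ 2 * H = 1 := by
  have := rel_one (Or.inr (Or.inr (Or.inr (Or.inr (Or.inl rfl)))))
  simp only [map_mul, map_pow, of_eq, Y, H] at this
  exact this

lemma relZ2 : Z⁻¹ ^ 2 * H = 1 := by
  have := rel_one (Or.inr (Or.inr (Or.inr (Or.inr (Or.inr (Or.inl rfl))))))
  simp only [map_mul, map_pow, map_inv, of_eq, Z, H] at this
  exact this

lemma relXYZ : X * Y * Z = 1 := by
  have := rel_one (Or.inr (Or.inr (Or.inr (Or.inr (Or.inr (Or.inr rfl))))))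
  simp only [map_mul, of_eq, X, Y, Z] at this
  exact this

lemma hXH : X * H = H * X := by
  have := relXH
  calc X * H = (X * H * X⁻¹ * H⁻¹) * (H * X) := by group
  _ = H * X := by rw [this, one_mul]

lemma hYH : Y * H = H * Y := by
  have := relYH
  calc Y * H = (Y * H * Y⁻¹ * H⁻¹) * (H * Y) := by group
  _ = H * Y := by rw [this, one_mul]

lemma hX2 : X ^ 2 = H⁻¹ := by
  have := relX2
  calc X ^ 2 = (X ^ 2 * H) * H⁻¹ := by group
  _ = H⁻¹ := by rw [this, one_mul]

lemma hY2 : Y ^ 2 = H⁻¹ := by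
  have := relY2
  calc Y ^ 2 = (Y ^ 2 * H) * H⁻¹ := by group
  _ = H⁻¹ := by rw [this, one_mul]

lemma hZ : Z = (X * Y)⁻¹ := by
  have := relXYZ
  calc Z = (X * Y)⁻¹ * (X * Y * Z) := by group
  _ = (X * Y)⁻¹ := by rw [this, mul_one]

lemma hXY2 : (X * Y) ^ 2 = H⁻¹ := by
  have h1 : Z⁻¹ ^ 2 = H⁻¹ := by
    have := relZ2
    calc Z⁻¹ ^ 2 = (Z⁻¹ ^ 2 * H) * H⁻¹ := by group
    _ = H⁻¹ := by rw [this, one_mul]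
  have h2 : Z⁻¹ = X * Y := by rw [hZ, inv_inv]
  rw [← h2, h1]

/-- `Y * X = X⁻¹ * Y`. -/
lemma key1 : Y * X = X⁻¹ * Y := by
  have h : X * Y * (X * Y) = Y * Y := by
    have := hXY2
    have h2 := hY2
    rw [pow_two] at this h2
    rw [this, h2]
  have h1 : Y * X * Y = X⁻¹ * (Y * Y) := by
    calc Y * X * Y = X⁻¹ * (X * Y * (X * Y)) := by group
    _ = X⁻¹ * (Y * Y) := by rw [h]
  calc Y * X = (Y * X * Y) * Y⁻¹ := by group
  _ = X⁻¹ * (Y * Y) * Y⁻¹ := by rw [h1]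
  _ = X⁻¹ * Y := by group

lemma hX4 : X ^ 4 = 1 := by
  -- Y * Xersquare = X⁻² * Y, and also X² commutes with Y since X² = H⁻¹.
  have hc : Y * X ^ 2 = X⁻¹ * X⁻¹ * Y := by
    rw [pow_two, ← mul_assoc, key1, mul_assoc, key1, ← mul_assoc]
  have hc2 : Y * X ^ 2 = X ^ 2 * Y := by
    rw [hX2]
    have := hYH
    calc Y * H⁻¹ = H⁻¹ * (H * Y * H⁻¹) := by group
    _ = H⁻¹ * (Y * H * H⁻¹) := by rw [← hYH]
    _ = H⁻¹ * Y := by group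
  have h3 : X⁻¹ * X⁻¹ * Y = X ^ 2 * Y := by rw [← hc, hc2]
  have h4 : X⁻¹ * X⁻¹ = X ^ 2 := mul_right_cancel h3
  calc X ^ 4 = X ^ 2 * (X * X) := by group
  _ = X⁻¹ * X⁻¹ * (X * X) := by rw [h4]
  _ = 1 := by group

lemma key3 (n : ℤ) : Y * X ^ n = X ^ (-n) * Y := by
  have hs : SemiconjBy Y X X⁻¹ := key1
  have := hs.zpow_right n
  rw [SemiconjBy] at this
  rw [this, inv_zpow, zpow_neg]

lemma hH : H = X ^ (-2 : ℤ) := by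
  have := hX2
  have h2 : H = (X ^ 2)⁻¹ := by rw [this, inv_inv]
  rw [h2]
  group

lemma hZeq : Z = X ^ (-1 : ℤ) * Y := by
  have hy : Y⁻¹ = H * Y := by
    have := hY2
    rw [pow_two] at this
    calc Y⁻¹ = Y⁻¹ * Y⁻¹ * Y := by group
    _ = (Y * Y)⁻¹ * Y := by group
    _ = (H⁻¹)⁻¹ * Y := by rw [this]
    _ = H * Y := by rw [inv_inv]
  calc Z = Y⁻¹ * X⁻¹ := by rw [hZ]; group
  _ = H * Y * X⁻¹ := by rw [hy]
  _ = X ^ (-2 : ℤ) * (Y * X ^ (-1 : ℤ)) := by rw [← hH]; group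
  _ = X ^ (-2 : ℤ) * (X ^ (1 : ℤ) * Y) := by rw [key3 (-1)]; norm_num
  _ = X ^ (-1 : ℤ) * Y := by group

/-- Every element of `P` has the form `X^m * Y^e`. -/
lemma span (p : P) : ∃ (m : ℤ) (e : Bool), p = X ^ m * Y ^ (cond e 1 0) := by
  have hcl : p ∈ Subgroup.closure (Set.range (PresentedGroup.of :
      Fin 4 → P)) := by
    rw [PresentedGroup.closure_range_of]
    trivial
  induction hcl using Subgroup.closure_induction with
  | mem g hg =>
      obtain ⟨i, rfl⟩ := hg
      fin_cases i
      · exact ⟨1, false, by simp [X]⟩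
      · exact ⟨0, true, by simp [Y]⟩
      · exact ⟨-1, true, by simpa [Z] using hZeq⟩
      · exact ⟨-2, false, by simpa [H] using hH⟩
  | one => exact ⟨0, false, by simp⟩
  | mul a b _ _ ha hb =>
      obtain ⟨m, e, rfl⟩ := ha
      obtain ⟨n, f, rfl⟩ := hb
      cases e with
      | false =>
          exact ⟨m + n, f, by rw [zpow_add]; simp [mul_assoc]⟩
      | true =>
          cases f with
          | false =>
              refine ⟨m - n, true, ?_⟩
              simp only [cond_true, cond_false, pow_one, pow_zero, mul_one]
              calc X ^ m * Y * X ^ n = X ^ m * (Y * X ^ n) := by group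
              _ = X ^ m * (X ^ (-n) * Y) := by rw [key3]
              _ = X ^ (m - n) * Y := by rw [sub_eq_add_neg, zpow_add]; group
          | true =>
              refine ⟨m - n + 2, false, ?_⟩
              have hyy : Y * Y = X ^ (2 : ℤ) := by
                have := hY2
                rw [pow_two] at this
                rw [this, hH]
                group
              simp only [cond_true, cond_false, pow_one, pow_zero, mul_one]
              calc X ^ m * Y * (X ^ n * Y) = X ^ m * (Y * X ^ n) * Y := by group
              _ = X ^ m * (X ^ (-n) * Y) * Y := by rw [key3]
              _ = X ^ m * X ^ (-n) * (Y * Y) := by group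
              _ = X ^ m * X ^ (-n) * X ^ (2 : ℤ) := by rw [hyy]
              _ = X ^ (m - n + 2) := by rw [← zpow_add, ← zpow_add, sub_eq_add_neg]
  | inv a _ ha =>
      obtain ⟨m, e, rfl⟩ := ha
      cases e with
      | false => exact ⟨-m, false, by simp⟩
      | true =>
          refine ⟨m - 2, true, ?_⟩
          have hy : Y⁻¹ = X ^ (-2 : ℤ) * Y := by
            have := hY2
            rw [pow_two] at this
            calc Y⁻¹ = (Y * Y)⁻¹ * Y := by group
            _ = (H⁻¹)⁻¹ * Y := by rw [this]
            _ = H * Y := by rw [inv_inv]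
            _ = X ^ (-2 : ℤ) * Y := by rw [hH]
          simp only [cond_true, pow_one]
          calc (X ^ m * Y)⁻¹ = Y⁻¹ * X ^ (-m) := by
                rw [mul_inv_rev, zpow_neg]
          _ = X ^ (-2 : ℤ) * (Y * X ^ (-m)) := by rw [hy]; group
          _ = X ^ (-2 : ℤ) * (X ^ m * Y) := by rw [key3]; norm_num
          _ = X ^ (m - 2) * Y := by rw [sub_eq_add_neg, add_comm, zpow_add]; group

lemma X_zpow_four : X ^ (4 : ℤ) = 1 := by
  have := hX4
  exact_mod_cast (zpow_natCast X 4).trans this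

/-- Surjection from an 8-element type onto `P`. -/
noncomputable def g8 : ZMod 4 × Bool → P := fun q => X ^ (q.1.val) * Y ^ (cond q.2 1 0)

lemma g8_surj : Function.Surjective g8 := by
  intro p
  obtain ⟨m, e, rfl⟩ := span p
  refine ⟨((m : ZMod 4), e), ?_⟩
  have h1 : X ^ m = X ^ (m % 4) := by
    conv_lhs => rw [← Int.emod_add_mul_ediv m 4]
    rw [zpow_add, zpow_mul, X_zpow_four, one_zpow, mul_one]
  have h2 : ((m : ZMod 4).val : ℤ) = m % 4 := ZMod.val_intCast m
  simp only [g8]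
  rw [h1, ← h2, zpow_natCast]

/-- The map to the quaternion group. -/
noncomputable def f : Fin 4 → QuaternionGroup 2 :=
  ![a 1, xa 0, (a 1 * xa 0)⁻¹, a 2]

lemma f_rels : ∀ r ∈ quaternionSpaceRels, FreeGroup.lift f r = 1 := by
  intro r hr
  rcases hr with rfl | rfl | rfl | rfl | rfl | rfl | rfl <;>
    simp only [map_mul, map_inv, map_pow, FreeGroup.lift_apply_of, f] <;> decide

noncomputable def φ : P →* QuaternionGroup 2 := PresentedGroup.toGroup f_rels

lemma φX : φ X = a 1 := by
  simp only [φ, X, PresentedGroup.toGroup.of, f]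
  rfl

lemma φY : φ Y = xa 0 := by
  simp only [φ, Y, PresentedGroup.toGroup.of, f]
  rfl

lemma φ_surj : Function.Surjective φ := by
  intro q
  cases q with
  | a i =>
      refine ⟨X ^ (i.val), ?_⟩
      rw [map_pow, φX, a_one_pow]
      congr 1
      simp [ZMod.natCast_val, ZMod.cast_id]
  | xa i =>
      refine ⟨Y * X ^ (i.val), ?_⟩
      rw [map_mul, map_pow, φX, φY, a_one_pow, xa_mul_a]
      congr 1
      simp [ZMod.natCast_val, ZMod.cast_id]

lemma P_finite : Finite P := Finite.of_surjective g8 g8_surj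

lemma cardQ : Nat.card (QuaternionGroup 2) = 8 := by
  rw [Nat.card_eq_fintype_card, QuaternionGroup.card]

lemma cardP : Nat.card P = 8 := by
  have := P_finite
  have h1 : Nat.card P ≤ 8 := by
    have := Nat.card_le_card_of_surjective g8 g8_surj
    simpa using this
  have h2 : 8 ≤ Nat.card P := by
    rw [← cardQ]
    exact Nat.card_le_card_of_surjective φ φ_surj
  omega

lemma φ_bij : Function.Bijective φ := by
  have := P_finite
  rw [Nat.bijective_iff_surjective_and_card]
  exact ⟨φ_surj, by rw [cardP, cardQ]⟩

end QSpaceAux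

theorem quaternion_space_pi1_iso_Q8 :
    Nonempty (PresentedGroup quaternionSpaceRels ≃* QuaternionGroup 2) :=
  ⟨MulEquiv.ofBijective QSpaceAux.φ QSpaceAux.φ_bij⟩
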